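/- Let N ∈ ℕ, let s ∈ ℕ with s < N, let x ∈ I_s ∖ I_{s+1}, and let n ∈ ℕ. Then ∫_{I_N} |D_n(x − t)| dμ(t) ≤ λ M_s / M_N, where λ = sup_k m_k and x − t denotes the group difference in G_m. -/

import Mathlib

open MeasureTheory Filter ENNReal Finset

noncomputable section

/-- The Vilenkin group `G_m`: complete direct product of cyclic groups `ℤ_{m_k}`. -/
abbrev Gm (m : ℕ → ℕ) : Type := ∀ k : ℕ, ZMod (m k)

/-- The generalized powers `M_0 = 1`, `M_{k+1} = m_k M_k`. -/
def Mgen (m : ℕ → ℕ) : ℕ → ℕ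
  | 0 => 1
  | k + 1 => m k * Mgen m k

/-- The digits of `n` in the generalized number system `n = Σ_j n_j M_j`. -/
def digit (m : ℕ → ℕ) (n j : ℕ) : ℕ := (n / Mgen m j) % m j

/-- The generalized Rademacher functions `r_k(x) = exp(2πi x_k / m_k)`. -/
def rade (m : ℕ → ℕ) (k : ℕ) (x : Gm m) : ℂ :=
  Complex.exp (2 * Real.pi * Complex.I * ((x k).val : ℂ) / (m k : ℂ))

/-- The Vilenkin system `ψ_n = Π_k r_k^{n_k}` (all digits `n_k` with `k > n` vanish). -/
def psi (m : ℕ → ℕ) (n : ℕ) (x : Gm m) : ℂ :=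
  ∏ k ∈ Finset.range (n + 1), rade m k x ^ digit m n k

/-- The cylinder `I_n(x) = {y : y_0 = x_0, ..., y_{n-1} = x_{n-1}}`. -/
def cyl (m : ℕ → ℕ) (n : ℕ) (x : Gm m) : Set (Gm m) := {y | ∀ j < n, y j = x j}

/-- Vilenkin–Fourier coefficient of an integrable function. -/
def fcoef (m : ℕ → ℕ) (μ : Measure (Gm m)) (f : Gm m → ℂ) (k : ℕ) : ℂ :=
  ∫ x, f x * (starRingEnd ℂ) (psi m k x) ∂μ

/-- Partial sums of the Vilenkin–Fourier series of a function. -/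
def Spart (m : ℕ → ℕ) (μ : Measure (Gm m)) (f : Gm m → ℂ) (n : ℕ) (x : Gm m) : ℂ :=
  ∑ k ∈ Finset.range n, fcoef m μ f k * psi m k x

/-- The Dirichlet kernels `D_n = Σ_{k<n} ψ_k`. -/
def Dker (m : ℕ → ℕ) (n : ℕ) (x : Gm m) : ℂ :=
  ∑ k ∈ Finset.range n, psi m k x

/-- `f = (f^{(n)})` is a martingale w.r.t. the filtration generated by the cylinders:
each `f^{(n)}` is integrable and, for `n ≤ k`, the conditional expectation of `f^{(k)}`
on the `n`-th σ-algebra (the average on each cylinder `I_n(x)`) equals `f^{(n)}`. -/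
def IsVMartingale (m : ℕ → ℕ) (μ : Measure (Gm m)) (f : ℕ → Gm m → ℂ) : Prop :=
  (∀ n, Integrable (f n) μ) ∧
  ∀ n k : ℕ, n ≤ k → ∀ x : Gm m, f n x = (Mgen m n : ℂ) * ∫ t in cyl m n x, f k t ∂μ

/-- Vilenkin–Fourier coefficient of a martingale: `lim_k ∫ f^{(k)} ψ̄_i dμ`; since the
integral is independent of `k` once `M_k > i`, and `M_{i+1} > i`, we take `k = i+1`. -/
def mfhat (m : ℕ → ℕ) (μ : Measure (Gm m)) (f : ℕ → Gm m → ℂ) (i : ℕ) : ℂ :=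
  ∫ x, f (i + 1) x * (starRingEnd ℂ) (psi m i x) ∂μ

/-- The `H_p` (quasi-)norm of a martingale: `‖sup_n |f^{(n)}|‖_{L^p(μ)}`, as an `ℝ≥0∞`. -/
def HpNorm (m : ℕ → ℕ) (μ : Measure (Gm m)) (p : ℝ) (f : ℕ → Gm m → ℂ) : ℝ≥0∞ :=
  (∫⁻ x, (⨆ n, (‖f n x‖₊ : ℝ≥0∞)) ^ p ∂μ) ^ (1 / p)

variable {m : ℕ → ℕ}

lemma Mgen_pos (hm : ∀ k, 2 ≤ m k) (k : ℕ) : 0 < Mgen m k := by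
  induction k with
  | zero => simp [Mgen]
  | succ k ih => exact Nat.mul_pos (by have := hm k; omega) ih

lemma two_pow_le_Mgen (hm : ∀ k, 2 ≤ m k) (k : ℕ) : 2 ^ k ≤ Mgen m k := by
  induction k with
  | zero => simp [Mgen]
  | succ k ih =>
    calc 2 ^ (k+1) = 2 * 2 ^ k := by ring
    _ ≤ m k * Mgen m k := Nat.mul_le_mul (hm k) ih
    _ = Mgen m (k+1) := rfl

lemma Mgen_dvd (s j : ℕ) (h : s ≤ j) : Mgen m s ∣ Mgen m j := by
  induction j with
  | zero =>
    have hs0 : s = 0 := by omega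
    subst hs0; rfl
  | succ j ih =>
    rcases Nat.lt_or_ge s (j+1) with h'|h'
    · exact dvd_mul_of_dvd_right (ih (by omega)) _
    · have : s = j + 1 := by omega
      subst this; rfl

lemma digit_eq_zero (hm : ∀ k, 2 ≤ m k) {n j : ℕ} (h : n < Mgen m j) :
    digit m n j = 0 := by
  unfold digit
  rw [Nat.div_eq_of_lt h, Nat.zero_mod]

lemma psi_eq_prod (hm : ∀ k, 2 ≤ m k) (n K : ℕ) (hK : n + 1 ≤ K) (x : Gm m) :
    psi m n x = ∏ k ∈ Finset.range K, rade m k x ^ digit m n k := by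
  unfold psi
  apply Finset.prod_subset (Finset.range_subset_range.2 hK)
  intro k hk hk'
  simp only [Finset.mem_range] at hk hk'
  have hn : n < Mgen m k := by
    have h2 : 2 ^ k ≤ Mgen m k := two_pow_le_Mgen hm k
    have h3 : k < 2 ^ k := Nat.lt_two_pow_self
    omega
  rw [digit_eq_zero hm hn, pow_zero]

lemma rade_rw (k : ℕ) (x : Gm m) (hmk : (m k : ℝ) ≠ 0) :
    rade m k x = Complex.exp (((2 * Real.pi * ((x k).val : ℝ) / (m k : ℝ)) : ℝ) * Complex.I) := by
  unfold rade
  congr 1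
  push_cast
  field_simp

lemma abs_rade (hm : ∀ k, 2 ≤ m k) (k : ℕ) (x : Gm m) :
    ‖rade m k x‖ = 1 := by
  have hmk : (m k : ℝ) ≠ 0 := by
    have := hm k; positivity
  rw [rade_rw k x hmk, Complex.norm_exp_ofReal_mul_I]

lemma rade_eq_one (hm : ∀ k, 2 ≤ m k) (k : ℕ) (x : Gm m) (h : x k = 0) :
    rade m k x = 1 := by
  haveI : NeZero (m k) := ⟨by have := hm k; omega⟩
  unfold rade
  rw [h, ZMod.val_zero]
  simp

lemma rade_pow_m (hm : ∀ k, 2 ≤ m k) (k : ℕ) (x : Gm m) :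
    rade m k x ^ (m k) = 1 := by
  have hmk : (m k : ℂ) ≠ 0 := by
    exact_mod_cast Nat.cast_ne_zero.2 (by have := hm k; omega)
  unfold rade
  rw [← Complex.exp_nat_mul]
  have : (m k : ℂ) * (2 * Real.pi * Complex.I * ((x k).val : ℂ) / (m k : ℂ))
      = ((x k).val : ℤ) * (2 * Real.pi * Complex.I) := by
    field_simp
    norm_cast
  rw [this, Complex.exp_int_mul_two_pi_mul_I]

lemma rade_ne_one (hm : ∀ k, 2 ≤ m k) (k : ℕ) (x : Gm m) (h : x k ≠ 0) :
    rade m k x ≠ 1 := by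
  haveI : NeZero (m k) := ⟨by have := hm k; omega⟩
  have hval : 0 < (x k).val := by
    rcases Nat.eq_zero_or_pos (x k).val with h0 | h0
    · exact absurd ((ZMod.val_eq_zero _).1 h0) h
    · exact h0
  have hlt : (x k).val < m k := ZMod.val_lt _
  intro heq
  unfold rade at heq
  rw [Complex.exp_eq_one_iff] at heq
  obtain ⟨z, hz⟩ := heq
  have hmk : (m k : ℂ) ≠ 0 := Nat.cast_ne_zero.2 (by have := hm k; omega)
  have hI : (2 : ℂ) * Real.pi * Complex.I ≠ 0 := by
    simp [Complex.I_ne_zero, Real.pi_ne_zero]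
  have key : (2 * (Real.pi:ℂ) * Complex.I) * (((x k).val : ℂ) / (m k : ℂ))
      = (2 * (Real.pi:ℂ) * Complex.I) * (z : ℂ) := by
    linear_combination hz
  have h3 := mul_left_cancel₀ hI key
  have : ((x k).val : ℂ) = z * (m k : ℂ) := by
    rw [div_eq_iff hmk] at h3
    exact h3
  have hz' : ((x k).val : ℤ) = z * (m k : ℤ) := by exact_mod_cast this
  have h1 : (1 : ℤ) ≤ z := by
    by_contra hc
    push_neg at hc
    have hz0 : z ≤ 0 := by omega
    have : z * (m k : ℤ) ≤ 0 := mul_nonpos_of_nonpos_of_nonneg hz0 (by positivity)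
    omega
  have : (m k : ℤ) ≤ z * (m k : ℤ) := le_mul_of_one_le_left (by positivity) h1
  omega

lemma abs_psi (hm : ∀ k, 2 ≤ m k) (n : ℕ) (x : Gm m) :
    ‖psi m n x‖ = 1 := by
  unfold psi
  rw [norm_prod]
  apply Finset.prod_eq_one
  intro k _
  rw [norm_pow, abs_rade hm, one_pow]

/-- Splitting a sum over `range (a*b)` into blocks. -/
lemma sum_range_mul_eq {β : Type*} [AddCommMonoid β] (f : ℕ → β) (a b : ℕ) :
    ∑ r ∈ Finset.range (a * b), f r
      = ∑ u ∈ Finset.range a, ∑ v ∈ Finset.range b, f (u * b + v) := by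
  induction a with
  | zero => simp
  | succ a ih =>
    rw [Finset.sum_range_succ, ← ih, Nat.succ_mul, Finset.range_eq_Ico,
      ← Finset.sum_Ico_consecutive _ (Nat.zero_le (a*b)) (Nat.le_add_right (a*b) b),
      ← Finset.range_eq_Ico, Finset.sum_Ico_eq_sum_range]
    simp

/-- For `y ∈ I_s` and `k = c·M_{s+1} + r` with `r < M_{s+1}`, `ψ_k(y)` factors. -/
lemma psi_split (hm : ∀ k, 2 ≤ m k) (s c r K : ℕ) (hr : r < Mgen m (s+1))
    (hK1 : c * Mgen m (s+1) + r + 1 ≤ K) (hK2 : s + 1 ≤ K)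
    (y : Gm m) (h0 : ∀ j < s, y j = 0) :
    psi m (c * Mgen m (s+1) + r) y
      = rade m s y ^ ((r / Mgen m s) % m s) *
        ∏ j ∈ Finset.Ico (s+1) K, rade m j y ^ digit m (c * Mgen m (s+1)) j := by
  have hMs : 0 < Mgen m s := Mgen_pos hm s
  rw [psi_eq_prod hm _ K hK1, ← Finset.prod_range_mul_prod_Ico _ hK2]
  congr 1
  · rw [Finset.prod_range_succ]
    have h1 : ∀ j ∈ Finset.range s,
        rade m j y ^ digit m (c * Mgen m (s+1) + r) j = 1 := by
      intro j hj
      rw [rade_eq_one hm j y (h0 j (Finset.mem_range.1 hj)), one_pow]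
    rw [Finset.prod_congr rfl h1, Finset.prod_const_one, one_mul]
    congr 1
    show (c * Mgen m (s+1) + r) / Mgen m s % m s = (r / Mgen m s) % m s
    have hM1 : Mgen m (s+1) = m s * Mgen m s := rfl
    have : c * Mgen m (s+1) + r = Mgen m s * (c * m s) + r := by rw [hM1]; ring
    rw [this, Nat.mul_add_div hMs, Nat.add_comm, Nat.add_mul_mod_self_right]
  · apply Finset.prod_congr rfl
    intro j hj
    obtain ⟨hj1, _⟩ := Finset.mem_Ico.1 hj
    congr 1
    obtain ⟨q, hq⟩ := Mgen_dvd (s+1) j hj1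
    show (c * Mgen m (s+1) + r) / Mgen m j % m j = c * Mgen m (s+1) / Mgen m j % m j
    have hMpos : 0 < Mgen m (s+1) := Mgen_pos hm (s+1)
    rw [hq, ← Nat.div_div_eq_div_mul, ← Nat.div_div_eq_div_mul]
    congr 2
    rw [Nat.mul_div_cancel _ hMpos]
    rw [mul_comm c, Nat.mul_add_div hMpos, Nat.div_eq_of_lt hr, Nat.add_zero]

lemma block_sum_zero (hm : ∀ k, 2 ≤ m k) (s : ℕ) (y : Gm m)
    (h0 : ∀ j < s, y j = 0) (hys : y s ≠ 0) (c : ℕ) :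
    ∑ k ∈ Finset.Ico (c * Mgen m (s+1)) (c * Mgen m (s+1) + Mgen m (s+1)),
      psi m k y = 0 := by
  set M := Mgen m (s+1) with hM
  set K := c * M + M + s + 1 with hK
  set z := rade m s y with hz
  set C := ∏ j ∈ Finset.Ico (s+1) K, rade m j y ^ digit m (c * M) j with hC
  have hMs : 0 < Mgen m s := Mgen_pos hm s
  rw [Finset.sum_Ico_eq_sum_range]
  simp only [Nat.add_sub_cancel_left]
  have hsum : ∀ r ∈ Finset.range M,
      psi m (c * M + r) y = z ^ ((r / Mgen m s) % m s) * C := by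
    intro r hr
    have hr' : r < M := Finset.mem_range.1 hr
    refine psi_split hm s c r K hr' ?_ ?_ y h0
    · show c * M + r + 1 ≤ c * M + M + s + 1
      omega
    · show s + 1 ≤ c * M + M + s + 1
      omega
  rw [Finset.sum_congr rfl hsum, ← Finset.sum_mul]
  have hMeq : M = m s * Mgen m s := rfl
  have hinner : ∑ r ∈ Finset.range M, z ^ ((r / Mgen m s) % m s) = 0 := by
    rw [hMeq, sum_range_mul_eq]
    have : ∀ u ∈ Finset.range (m s), ∑ v ∈ Finset.range (Mgen m s),
        z ^ ((u * Mgen m s + v) / Mgen m s % m s)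
        = (Mgen m s : ℂ) * z ^ u := by
      intro u hu
      have hu' := Finset.mem_range.1 hu
      have h1 : ∀ v ∈ Finset.range (Mgen m s),
          z ^ ((u * Mgen m s + v) / Mgen m s % m s) = z ^ u := by
        intro v hv
        congr 1
        rw [mul_comm u, Nat.mul_add_div hMs,
          Nat.div_eq_of_lt (Finset.mem_range.1 hv), Nat.add_zero,
          Nat.mod_eq_of_lt hu']
      rw [Finset.sum_congr rfl h1, Finset.sum_const, Finset.card_range,
        nsmul_eq_mul]
    rw [Finset.sum_congr rfl this, ← Finset.mul_sum]
    have hzgeom : ∑ u ∈ Finset.range (m s), z ^ u = 0 := by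
      rw [geom_sum_eq (rade_ne_one hm s y hys), rade_pow_m hm]
      simp
    rw [hzgeom, mul_zero]
  rw [hinner, zero_mul]

lemma prefix_sum_zero (hm : ∀ k, 2 ≤ m k) (s : ℕ) (y : Gm m)
    (h0 : ∀ j < s, y j = 0) (hys : y s ≠ 0) (q : ℕ) :
    ∑ k ∈ Finset.range (q * Mgen m (s+1)), psi m k y = 0 := by
  induction q with
  | zero => simp
  | succ q ih =>
    rw [Nat.succ_mul, Finset.range_eq_Ico,
      ← Finset.sum_Ico_consecutive _ (Nat.zero_le _)
        (Nat.le_add_right (q * Mgen m (s+1)) (Mgen m (s+1))),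
      ← Finset.range_eq_Ico, ih, zero_add]
    exact block_sum_zero hm s y h0 hys q

lemma Dker_le (hm : ∀ k, 2 ≤ m k) (s n : ℕ) (y : Gm m)
    (h0 : ∀ j < s, y j = 0) (hys : y s ≠ 0) :
    ‖Dker m n y‖ ≤ (m s * Mgen m s : ℕ) := by
  set M := Mgen m (s+1) with hM
  have hMpos : 0 < M := Mgen_pos hm (s+1)
  set q := n / M with hq
  have hq1 : q * M ≤ n := Nat.div_mul_le_self n M
  have hq2 : n - q * M < M := by
    have h1 : n - q * M = n % M := by
      conv_lhs => rw [← Nat.div_add_mod n M]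
      rw [← hq, mul_comm M q, Nat.add_sub_cancel_left]
    rw [h1]
    exact Nat.mod_lt n hMpos
  have hsplit : Dker m n y = ∑ k ∈ Finset.Ico (q * M) n, psi m k y := by
    unfold Dker
    rw [Finset.range_eq_Ico, ← Finset.sum_Ico_consecutive _ (Nat.zero_le _) hq1,
      ← Finset.range_eq_Ico, prefix_sum_zero hm s y h0 hys q, zero_add]
  rw [hsplit]
  calc ‖∑ k ∈ Finset.Ico (q * M) n, psi m k y‖
      ≤ ∑ k ∈ Finset.Ico (q * M) n, ‖psi m k y‖ :=
        norm_sum_le _ _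
    _ = ∑ k ∈ Finset.Ico (q * M) n, 1 := by
        exact Finset.sum_congr rfl fun k _ => abs_psi hm k y
    _ = ((n - q * M : ℕ) : ℝ) := by rw [Finset.sum_const, Nat.card_Ico]; simp
    _ ≤ ((m s * Mgen m s : ℕ) : ℝ) := by
        have hM' : M = m s * Mgen m s := rfl
        have hle : n - q * M ≤ m s * Mgen m s := hq2.le.trans hM'.le
        exact_mod_cast hle

/-- If `s < N` and `x ∈ I_s ∖ I_{s+1}`, then for every `n`,
`∫_{I_N} |D_n(x - t)| dμ(t) ≤ λ M_s / M_N`, where `λ = sup_k m_k`. -/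
theorem dirichlet_kernel_integral_bound
    (m : ℕ → ℕ) (hm : ∀ k, 2 ≤ m k) (lam : ℕ) (hlam : ∀ k, m k ≤ lam)
    (μ : Measure (Gm m)) (hμ : ∀ n x, μ (cyl m n x) = ((Mgen m n : ℝ≥0∞))⁻¹)
    (N s : ℕ) (hs : s < N) (x : Gm m) (hx : x ∈ cyl m s 0 \ cyl m (s + 1) 0) (n : ℕ) :
    (∫ t in cyl m N 0, ‖Dker m n (x - t)‖ ∂μ) ≤
      (lam : ℝ) * Mgen m s / Mgen m N := by
  obtain ⟨hx1, hx2⟩ := hx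
  simp only [cyl, Set.mem_setOf_eq] at hx1 hx2
  have hx1' : ∀ j < s, x j = 0 := fun j hj => by simpa using hx1 j hj
  have hxs : x s ≠ 0 := by
    by_contra hc
    apply hx2
    intro j hj
    rcases Nat.lt_or_ge j s with h | h
    · simpa using hx1' j h
    · have hjs : j = s := by omega
      subst hjs
      simpa using hc
  have hmeas : MeasurableSet (cyl m N (0 : Gm m)) := by
    have hrw : cyl m N (0 : Gm m)
        = ⋂ j ∈ Finset.range N, (fun y : Gm m => y j) ⁻¹' {(0 : Gm m) j} := by
      ext y
      simp [cyl]
    rw [hrw]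
    exact Finset.measurableSet_biInter _ fun j _ =>
      (measurable_pi_apply j) (measurableSet_singleton _)
  have hC : ∀ t ∈ cyl m N (0 : Gm m),
      ‖‖Dker m n (x - t)‖‖ ≤ ((m s * Mgen m s : ℕ) : ℝ) := by
    intro t ht
    rw [Real.norm_eq_abs, abs_of_nonneg (norm_nonneg _)]
    apply Dker_le hm s n (x - t)
    · intro j hj
      have htj : t j = 0 := by simpa using ht j (lt_trans hj hs)
      have hxj : x j = 0 := hx1' j hj
      simp [Pi.sub_apply, htj, hxj]
    · have hts : t s = 0 := by simpa using ht s hs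
      simp [Pi.sub_apply, hts, hxs]
  have hfin : μ (cyl m N (0 : Gm m)) < ⊤ := by
    rw [hμ]
    refine ENNReal.inv_lt_top.2 ?_
    exact_mod_cast Nat.cast_pos.2 (Mgen_pos hm N)
  have hnorm := norm_setIntegral_le_of_norm_le_const hfin hC
  have htr : (μ (cyl m N (0 : Gm m))).toReal = ((Mgen m N : ℝ))⁻¹ := by
    rw [hμ, ENNReal.toReal_inv]
    simp
  have hMspos : (0 : ℝ) < Mgen m s := by exact_mod_cast Mgen_pos hm s
  have hMNpos : (0 : ℝ) < Mgen m N := by exact_mod_cast Mgen_pos hm N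
  calc (∫ t in cyl m N 0, ‖Dker m n (x - t)‖ ∂μ)
      ≤ ‖∫ t in cyl m N 0, ‖Dker m n (x - t)‖ ∂μ‖ := le_abs_self _
    _ ≤ ((m s * Mgen m s : ℕ) : ℝ) * (μ (cyl m N (0 : Gm m))).toReal := hnorm
    _ = (m s : ℝ) * (Mgen m s : ℝ) * (Mgen m N : ℝ)⁻¹ := by
        rw [htr]; push_cast; ring
    _ ≤ (lam : ℝ) * Mgen m s / Mgen m N := by
        rw [div_eq_mul_inv]
        have h1 : (m s : ℝ) ≤ lam := by exact_mod_cast hlam s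
        have h2 : (m s : ℝ) * Mgen m s ≤ (lam : ℝ) * Mgen m s :=
          mul_le_mul_of_nonneg_right h1 hMspos.le
        exact mul_le_mul_of_nonneg_right h2 (by positivity)

end
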